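/- Fix an integer d ≥ 1 and let β > 1/2. There exists a constant C > 0 depending only on β such that for every s ∈ [−1, 0) and every b ∈ Ê, Σ_{a∈Ê} (a/b)^s / ((1 + ln a)^{2β} (1 + |a − b|)) ≤ C; that is, the sum over a ∈ Ê of (a/b)^s divided by (1+ln a)^{2β}(1+|a−b|) is bounded uniformly in b ∈ Ê and s ∈ [−1,0). -/

import Mathlib

open Real Finset

lemma harm_bound (n : ℕ) : ∑ i ∈ Finset.range n, ((i : ℝ) + 1)⁻¹ ≤ 1 + Real.log n := by
  have h := harmonic_le_one_add_log n
  have h2 : ((harmonic n : ℚ) : ℝ) = ∑ i ∈ Finset.range n, ((i : ℝ) + 1)⁻¹ := by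
    simp [harmonic]
  linarith [h2 ▸ h]

lemma harm_abs_bound (n m : ℕ) (hm : m < n) :
    ∑ k ∈ Finset.range n, (1 + |(k : ℝ) - m|)⁻¹ ≤ 2 * (1 + Real.log n) := by
  have hn0 : 0 < n := lt_of_le_of_lt (Nat.zero_le m) hm
  have hn1 : (1:ℝ) ≤ (n:ℝ) := by exact_mod_cast hn0
  have hlogn : 0 ≤ Real.log n := Real.log_nonneg hn1
  have hsplit : ∑ k ∈ Finset.range n, (1 + |(k : ℝ) - m|)⁻¹
      = ∑ k ∈ Finset.range (m+1), (1 + |(k : ℝ) - m|)⁻¹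
        + ∑ k ∈ Finset.Ico (m+1) n, (1 + |(k : ℝ) - m|)⁻¹ := by
    rw [Finset.range_eq_Ico, ← Finset.sum_Ico_consecutive _ (Nat.zero_le (m+1)) hm, Finset.range_eq_Ico]
  have h1 : ∑ k ∈ Finset.range (m+1), (1 + |(k : ℝ) - m|)⁻¹
      ≤ 1 + Real.log n := by
    have hre : ∑ k ∈ Finset.range (m+1), (1 + |(k : ℝ) - m|)⁻¹
        = ∑ j ∈ Finset.range (m+1), (1 + |((m + 1 - 1 - j : ℕ) : ℝ) - m|)⁻¹ :=
      (Finset.sum_range_reflect (fun k => (1 + |(k : ℝ) - m|)⁻¹) (m+1)).symm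
    rw [hre]
    have : ∀ j ∈ Finset.range (m+1), (1 + |((m + 1 - 1 - j : ℕ) : ℝ) - m|)⁻¹ = ((j:ℝ) + 1)⁻¹ := by
      intro j hj
      rw [Finset.mem_range] at hj
      have hjm : j ≤ m := Nat.lt_succ_iff.mp hj
      have : ((m + 1 - 1 - j : ℕ) : ℝ) = (m : ℝ) - j := by
        simp only [Nat.add_sub_cancel]
        push_cast [Nat.cast_sub hjm]
        ring
      rw [this]
      rw [show (m:ℝ) - j - m = -j by ring, abs_neg, abs_of_nonneg (by positivity : (0:ℝ) ≤ (j:ℝ))]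
      ring_nf
    rw [Finset.sum_congr rfl this]
    refine (harm_bound (m+1)).trans ?_
    have : Real.log ((m+1 : ℕ) : ℝ) ≤ Real.log n := by
      apply Real.log_le_log (by positivity)
      exact_mod_cast hm
    linarith
  have h2 : ∑ k ∈ Finset.Ico (m+1) n, (1 + |(k : ℝ) - m|)⁻¹ ≤ 1 + Real.log n := by
    rw [Finset.sum_Ico_eq_sum_range]
    have hle : ∀ j ∈ Finset.range (n - (m+1)), (1 + |((m + 1 + j : ℕ) : ℝ) - m|)⁻¹ ≤ ((j:ℝ)+1)⁻¹ := by
      intro j _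
      have : ((m + 1 + j : ℕ) : ℝ) - m = 1 + j := by push_cast; ring
      rw [this, abs_of_nonneg (by positivity)]
      rw [inv_le_inv₀ (by positivity) (by positivity)]
      linarith
    refine (Finset.sum_le_sum hle).trans ?_
    refine (harm_bound _).trans ?_
    have hc : ((n - (m+1) : ℕ) : ℝ) ≤ (n : ℝ) := by
      exact_mod_cast Nat.sub_le n (m+1)
    have : Real.log ((n - (m+1) : ℕ) : ℝ) ≤ Real.log n := by
      rcases Nat.eq_zero_or_pos (n - (m+1)) with h0 | hpos
      · rw [h0]; simpa using hlogn
      · exact Real.log_le_log (by exact_mod_cast hpos) hc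
    linarith
  rw [hsplit]; linarith

open Real Finset

lemma bertrand_summable {β : ℝ} (hβ : 1 / 2 < β) :
    Summable (fun n : ℕ => ((n : ℝ) * (1 + Real.log n) ^ (2*β))⁻¹) := by
  have h2β1 : 1 < 2*β := by linarith
  have h2β0 : (0:ℝ) ≤ 2*β := by linarith
  set f : ℕ → ℝ := fun n => ((n : ℝ) * (1 + Real.log n) ^ (2*β))⁻¹ with hf
  have hnonneg : ∀ n, 0 ≤ f n := by
    intro n
    rcases Nat.eq_zero_or_pos n with h0 | hpos
    · simp [hf, h0]
    · have h1 : (1:ℝ) ≤ (n:ℝ) := by exact_mod_cast hpos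
      have : (0:ℝ) ≤ 1 + Real.log n := by linarith [Real.log_nonneg h1]
      positivity
  have hmono : ∀ ⦃m n : ℕ⦄, 0 < m → m ≤ n → f n ≤ f m := by
    intro m n hm hmn
    have hm1 : (1:ℝ) ≤ (m:ℝ) := by exact_mod_cast hm
    have hn1 : (1:ℝ) ≤ (n:ℝ) := by exact_mod_cast hm.trans_le hmn
    have hmn' : (m:ℝ) ≤ (n:ℝ) := by exact_mod_cast hmn
    have hlm : (1:ℝ) ≤ 1 + Real.log m := by linarith [Real.log_nonneg hm1]
    have hln : (1:ℝ) ≤ 1 + Real.log n := by linarith [Real.log_nonneg hn1]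
    apply inv_anti₀
    · have : (1:ℝ) ≤ (1 + Real.log m) ^ (2*β) := by
        calc (1:ℝ) = (1 + Real.log m) ^ (0:ℝ) := (Real.rpow_zero _).symm
        _ ≤ (1 + Real.log m) ^ (2*β) := Real.rpow_le_rpow_of_exponent_le hlm h2β0
      nlinarith
    · apply mul_le_mul hmn' ?_ (by positivity) (by positivity)
      apply Real.rpow_le_rpow (by linarith) ?_ h2β0
      have := Real.log_le_log (by linarith : (0:ℝ) < (m:ℝ)) hmn'
      linarith
  rw [← summable_condensed_iff_of_nonneg hnonneg hmono]
  have hcond : ∀ k : ℕ, (2:ℝ)^k * f (2^k) = ((1 + (k:ℝ) * Real.log 2) ^ (2*β))⁻¹ := by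
    intro k
    have h2k : ((2^k : ℕ) : ℝ) = (2:ℝ)^k := by push_cast; ring
    have hpos : (0:ℝ) < (2:ℝ)^k := by positivity
    rw [hf]
    simp only [h2k]
    rw [Real.log_pow]
    rw [mul_inv, ← mul_assoc, mul_inv_cancel₀ (ne_of_gt hpos), one_mul]
  simp only [hcond]
  rw [← summable_nat_add_iff 1]
  have hbound : ∀ n : ℕ, ((1 + ((n+1:ℕ):ℝ) * Real.log 2) ^ (2*β))⁻¹
      ≤ ((Real.log 2) ^ (2*β))⁻¹ * ((((n+1:ℕ):ℝ)) ^ (2*β))⁻¹ := by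
    intro n
    have hl2 : (0:ℝ) < Real.log 2 := Real.log_pos (by norm_num)
    have hn1 : (1:ℝ) ≤ ((n+1:ℕ):ℝ) := by exact_mod_cast Nat.one_le_iff_ne_zero.mpr (Nat.succ_ne_zero n)
    rw [← mul_inv, ← Real.mul_rpow hl2.le (by positivity)]
    apply inv_anti₀
    · positivity
    · apply Real.rpow_le_rpow (by positivity) ?_ h2β0
      nlinarith
  apply Summable.of_nonneg_of_le (fun n => by positivity) hbound
  apply Summable.mul_left
  have : Summable (fun n : ℕ => (((n:ℝ)) ^ (2*β))⁻¹) := Real.summable_nat_rpow_inv.mpr h2β1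
  exact_mod_cast (summable_nat_add_iff 1).mpr this

set_option maxHeartbeats 2000000 in
theorem stmt12 (d : ℕ) (hd : 1 ≤ d) (β : ℝ) (hβ : 1 / 2 < β) :
    ∃ C > 0, ∀ s ∈ Set.Ico (-1 : ℝ) 0, ∀ kb : ℕ,
      Summable (fun k : ℕ =>
        (((d : ℝ) + 2 * k) / ((d : ℝ) + 2 * kb)) ^ s /
          ((1 + Real.log ((d : ℝ) + 2 * k)) ^ (2 * β) *
            (1 + |((d : ℝ) + 2 * k) - ((d : ℝ) + 2 * kb)|))) ∧
      ∑' k : ℕ, (((d : ℝ) + 2 * k) / ((d : ℝ) + 2 * kb)) ^ s /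
          ((1 + Real.log ((d : ℝ) + 2 * k)) ^ (2 * β) *
            (1 + |((d : ℝ) + 2 * k) - ((d : ℝ) + 2 * kb)|)) ≤ C := by
  have h2β1 : (1:ℝ) < 2*β := by linarith
  have h2β0 : (0:ℝ) ≤ 2*β := by linarith
  have hd1 : (1:ℝ) ≤ (d:ℝ) := by exact_mod_cast hd
  have hlog2pos : (0:ℝ) < Real.log 2 := Real.log_pos (by norm_num)
  have hlog2 : Real.log 2 < 1 := by
    have := Real.log_two_lt_d9; linarith
  have hc0 : (0:ℝ) < 1 - Real.log 2 := by linarith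
  set K : ℝ := ((1 - Real.log 2) ^ (2*β))⁻¹ with hKdef
  have hKpos : (0:ℝ) < K := by
    rw [hKdef]
    exact inv_pos.mpr (Real.rpow_pos_of_pos hc0 _)
  clear_value K
  have ha1 : ∀ k : ℕ, (1:ℝ) ≤ (d:ℝ) + 2*k := by
    intro k
    have : (0:ℝ) ≤ 2*(k:ℝ) := by positivity
    linarith
  have hlogaux : ∀ k : ℕ, (0:ℝ) ≤ Real.log ((d:ℝ)+2*k) := fun k => Real.log_nonneg (ha1 k)
  set V : ℕ → ℝ := fun k => (((d:ℝ)+2*k) * (1 + Real.log ((d:ℝ)+2*k)) ^ (2*β))⁻¹ with hVdef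
  have hVnonneg : ∀ k, 0 ≤ V k := by
    intro k
    have h1 := ha1 k; have h2 := hlogaux k
    rw [hVdef]
    exact inv_nonneg.mpr (mul_nonneg (by linarith) (Real.rpow_nonneg (by linarith) _))
  have hVsum : Summable V := by
    have hshift : Summable (fun k : ℕ =>
        ((((k+1:ℕ)):ℝ) * (1 + Real.log (((k+1:ℕ)):ℝ)) ^ (2*β))⁻¹) :=
      (summable_nat_add_iff 1).mpr (bertrand_summable hβ)
    refine Summable.of_nonneg_of_le hVnonneg (fun k => ?_) hshift
    rw [hVdef]
    have h1 := ha1 k; have h2 := hlogaux k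
    have hk1 : (1:ℝ) ≤ (((k+1:ℕ)):ℝ) := by
      exact_mod_cast Nat.one_le_iff_ne_zero.mpr (Nat.succ_ne_zero k)
    have hlk1 : (0:ℝ) ≤ Real.log (((k+1:ℕ)):ℝ) := Real.log_nonneg hk1
    have hle : (((k+1:ℕ)):ℝ) ≤ (d:ℝ) + 2*k := by push_cast; linarith
    apply inv_anti₀
    · exact mul_pos (by linarith) (Real.rpow_pos_of_pos (by linarith) _)
    · apply mul_le_mul hle ?_ (Real.rpow_nonneg (by linarith) _) (by linarith)
      apply Real.rpow_le_rpow (by linarith) ?_ h2β0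
      have := Real.log_le_log (by linarith : (0:ℝ) < (((k+1:ℕ)):ℝ)) hle
      linarith
  clear_value V
  set tV := ∑' k, V k with htVdef
  have htV0 : 0 ≤ tV := tsum_nonneg hVnonneg
  clear_value tV
  refine ⟨3*tV + 8*K + 1, by linarith, ?_⟩
  intro s hs kb
  obtain ⟨hs1, hs0⟩ := hs
  set b : ℝ := (d:ℝ) + 2*kb with hbdef
  have hb1 : (1:ℝ) ≤ b := ha1 kb
  have hb0 : (0:ℝ) < b := by linarith
  have hlogb : 0 ≤ Real.log b := Real.log_nonneg hb1
  clear_value b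
  set Lb : ℝ := (1 + Real.log b) ^ (2*β) with hLbdef
  have hLbpos : 0 < Lb := Real.rpow_pos_of_pos (by linarith) _
  have hLb1 : (1 + Real.log b) ≤ Lb := by
    calc 1 + Real.log b = (1 + Real.log b) ^ (1:ℝ) := (Real.rpow_one _).symm
    _ ≤ Lb := Real.rpow_le_rpow_of_exponent_le (by linarith) (by linarith)
  clear_value Lb
  set N : ℕ := d + 2*kb with hNdef
  clear_value N
  set B : ℕ → ℝ := fun k => if k < N+1 then 2*K*Lb⁻¹*(1+|(k:ℝ)-(kb:ℝ)|)⁻¹ else 0 with hBdef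
  clear_value B
  have hBnonneg : ∀ k, 0 ≤ B k := by
    intro k
    rw [hBdef]
    dsimp only
    split
    · positivity
    · exact le_refl 0
  have hBsupp : ∀ k ∉ Finset.range (N+1), B k = 0 := by
    intro k hk
    rw [Finset.mem_range] at hk
    simp only [hBdef]; exact if_neg hk
  have hBsum : Summable B := summable_of_ne_finset_zero hBsupp
  set T : ℕ → ℝ := fun k : ℕ =>
      (((d : ℝ) + 2 * k) / b) ^ s /
        ((1 + Real.log ((d : ℝ) + 2 * k)) ^ (2 * β) * (1 + |((d : ℝ) + 2 * k) - b|)) with hTdef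
  clear_value T
  have hT0 : ∀ k, 0 ≤ T k := by
    intro k
    rw [hTdef]
    dsimp only
    have h2 := hlogaux k
    apply div_nonneg (Real.rpow_nonneg (by positivity) _)
    exact mul_nonneg (Real.rpow_nonneg (by linarith) _) (by positivity)
  have key : ∀ k, T k ≤ 3 * V k + B k := by
    intro k
    rw [hTdef, hVdef]
    dsimp only
    have hA1 : (1:ℝ) ≤ (d:ℝ) + 2*k := ha1 k
    have hlA' : (0:ℝ) ≤ Real.log ((d:ℝ) + 2*k) := hlogaux k
    set A : ℝ := (d:ℝ) + 2*k with hAdef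
    have hA0 : (0:ℝ) < A := by linarith
    set X : ℝ := |A - b| with hXdef
    have hX0 : (0:ℝ) ≤ X := abs_nonneg _
    set LA : ℝ := (1 + Real.log A) ^ (2*β) with hLAdef
    have hLA1 : (1:ℝ) ≤ LA := by
      calc (1:ℝ) = (1 + Real.log A) ^ (0:ℝ) := (Real.rpow_zero _).symm
      _ ≤ LA := Real.rpow_le_rpow_of_exponent_le (by linarith) h2β0
    have hLA0 : (0:ℝ) < LA := by linarith
    have hlAX : (0:ℝ) ≤ Real.log A := hlA'
    clear_value A X LA
    have hD0 : (0:ℝ) < LA * (1 + X) := mul_pos hLA0 (by linarith)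
    have hQ0 : (0:ℝ) < A * (LA * (1 + X)) := mul_pos hA0 hD0
    have hbAX : b ≤ A + X := by
      have := neg_abs_le (A - b)
      rw [hXdef]; linarith
    have step1 : (A/b)^s ≤ (A+X)/A := by
      rcases le_total b A with h | h
      · have h1 : (A/b)^s ≤ 1 :=
          Real.rpow_le_one_of_one_le_of_nonpos ((one_le_div hb0).mpr h) hs0.le
        have h2 : (1:ℝ) ≤ (A+X)/A := by
          rw [le_div_iff₀ hA0]; linarith
        linarith
      · have hba1 : (1:ℝ) ≤ b/A := (one_le_div hA0).mpr h
        calc (A/b)^s = (b/A)^(-s) := by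
              rw [Real.rpow_neg (by positivity), ← Real.inv_rpow (by positivity), inv_div]
        _ ≤ (b/A)^(1:ℝ) := Real.rpow_le_rpow_of_exponent_le hba1 (by linarith)
        _ = b/A := Real.rpow_one _
        _ ≤ (A+X)/A := by
              rw [div_le_div_iff₀ hA0 hA0]
              nlinarith
    have step2 : (A/b)^s / (LA * (1+X)) ≤ (A+X) / (A * (LA * (1+X))) := by
      conv_rhs => rw [← div_div]
      rw [div_le_div_iff₀ hD0 hD0]
      exact mul_le_mul_of_nonneg_right step1 hD0.le
    rcases le_or_gt A (1+X) with hcase | hcase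
    · -- far region below: A ≤ 1+X
      have h3 : (A+X)/(A*(LA*(1+X))) ≤ (2*(1+X))/(A*(LA*(1+X))) := by
        rw [div_le_div_iff₀ hQ0 hQ0]
        nlinarith
      have h4 : (2*(1+X))/(A*(LA*(1+X))) = 2*(A*LA)⁻¹ := by
        field_simp
      have h5 := hBnonneg k
      have h6 : (0:ℝ) ≤ (A*LA)⁻¹ := by positivity
      calc (A/b)^s / (LA * (1+X)) ≤ (A+X)/(A*(LA*(1+X))) := step2
      _ ≤ 2*(A*LA)⁻¹ := h4 ▸ h3
      _ ≤ 3*(A*LA)⁻¹ + B k := by linarith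
    · rcases le_or_gt (2*b) A with hc2 | hc2
      · -- far region above: A ≥ 2b
        have hXeq : X = A - b := by
          rw [hXdef, abs_of_nonneg (by linarith)]
        have hA2X : A ≤ 2*(1+X) := by rw [hXeq] at *; linarith
        have h3 : (A+X)/(A*(LA*(1+X))) ≤ (3*(1+X))/(A*(LA*(1+X))) := by
          rw [div_le_div_iff₀ hQ0 hQ0]
          nlinarith
        have h4 : (3*(1+X))/(A*(LA*(1+X))) = 3*(A*LA)⁻¹ := by
          field_simp
        have h5 := hBnonneg k
        calc (A/b)^s / (LA * (1+X)) ≤ (A+X)/(A*(LA*(1+X))) := step2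
        _ ≤ 3*(A*LA)⁻¹ := h4 ▸ h3
        _ ≤ 3*(A*LA)⁻¹ + B k := by linarith
      · -- middle region: 1+X < A and A < 2b
        have hXA : X < A := by linarith
        have hkN : k < N + 1 := by
          have hr : ((k:ℝ)) < (N:ℝ) := by
            rw [hNdef]
            push_cast
            have h2b : A < 2*b := hc2
            rw [hAdef, hbdef] at h2b
            linarith
          have : k < N := by exact_mod_cast hr
          omega
        have hBk : B k = 2*K*Lb⁻¹*(1+|(k:ℝ)-(kb:ℝ)|)⁻¹ := by
          rw [hBdef]
          simp only [if_pos hkN]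
        have hXk : X = 2*|(k:ℝ)-(kb:ℝ)| := by
          rw [hXdef, hAdef, hbdef, show (d:ℝ)+2*k - ((d:ℝ)+2*kb) = 2*((k:ℝ)-(kb:ℝ)) by ring,
            abs_mul, abs_two]
        have hlogbA : Real.log b ≤ Real.log 2 + Real.log A := by
          rw [← Real.log_mul two_ne_zero (ne_of_gt hA0)]
          exact Real.log_le_log hb0 (by linarith)
        have hlin : (1 - Real.log 2) * (1 + Real.log b) ≤ 1 + Real.log A := by
          nlinarith [mul_nonneg hlog2pos.le hlogb]
        have hLAge : (1 - Real.log 2)^(2*β) * Lb ≤ LA := by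
          rw [hLAdef, hLbdef, ← Real.mul_rpow hc0.le (by linarith)]
          exact Real.rpow_le_rpow (by positivity) hlin h2β0
        have hLAinv : LA⁻¹ ≤ K * Lb⁻¹ := by
          rw [hKdef, ← mul_inv]
          exact inv_anti₀ (mul_pos (Real.rpow_pos_of_pos hc0 _) hLbpos) hLAge
        have h1X : (1+X)⁻¹ ≤ (1+|(k:ℝ)-(kb:ℝ)|)⁻¹ := by
          rw [hXk]
          apply inv_anti₀ (by positivity)
          linarith [abs_nonneg ((k:ℝ)-(kb:ℝ))]
        have h3 : (A+X)/(A*(LA*(1+X))) ≤ (2*A)/(A*(LA*(1+X))) := by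
          rw [div_le_div_iff₀ hQ0 hQ0]
          nlinarith
        have h4 : (2*A)/(A*(LA*(1+X))) = 2*(LA⁻¹*(1+X)⁻¹) := by
          field_simp
        have h5 : LA⁻¹*(1+X)⁻¹ ≤ (K*Lb⁻¹)*(1+|(k:ℝ)-(kb:ℝ)|)⁻¹ :=
          mul_le_mul hLAinv h1X (by positivity) (by positivity)
        have h6 : (0:ℝ) ≤ (A*LA)⁻¹ := by positivity
        calc (A/b)^s / (LA * (1+X)) ≤ (A+X)/(A*(LA*(1+X))) := step2
        _ ≤ 2*(LA⁻¹*(1+X)⁻¹) := h4 ▸ h3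
        _ ≤ 2*((K*Lb⁻¹)*(1+|(k:ℝ)-(kb:ℝ)|)⁻¹) := by linarith
        _ = B k := by rw [hBk]; ring
        _ ≤ 3*(A*LA)⁻¹ + B k := by linarith
  have hRsum : Summable (fun k => 3*V k + B k) := (hVsum.mul_left 3).add hBsum
  have hTsum : Summable T := hRsum.of_nonneg_of_le hT0 key
  constructor
  · exact hTsum
  · have htB : ∑' k, B k ≤ 8*K := by
      rw [tsum_eq_sum hBsupp]
      have heq : ∀ k ∈ Finset.range (N+1), B k = 2*K*Lb⁻¹*(1+|(k:ℝ)-(kb:ℝ)|)⁻¹ := by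
        intro k hk
        rw [Finset.mem_range] at hk
        rw [hBdef]
        simp only [if_pos hk]
      rw [Finset.sum_congr rfl heq, ← Finset.mul_sum]
      have hkbN : kb < N+1 := by omega
      have hS := harm_abs_bound (N+1) kb hkbN
      have hcast : (((N+1:ℕ)):ℝ) = b+1 := by
        rw [hNdef, hbdef]; push_cast; ring
      have hlogN : Real.log (((N+1:ℕ)):ℝ) ≤ Real.log 2 + Real.log b := by
        rw [hcast, ← Real.log_mul two_ne_zero (ne_of_gt hb0)]
        exact Real.log_le_log (by linarith) (by linarith)
      have hS4 : ∑ k ∈ Finset.range (N+1), (1+|(k:ℝ)-(kb:ℝ)|)⁻¹ ≤ 4 * Lb := by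
        calc ∑ k ∈ Finset.range (N+1), (1+|(k:ℝ)-(kb:ℝ)|)⁻¹
            ≤ 2 * (1 + Real.log (((N+1:ℕ)):ℝ)) := hS
        _ ≤ 4 * (1 + Real.log b) := by linarith
        _ ≤ 4 * Lb := by linarith
      calc 2*K*Lb⁻¹ * ∑ k ∈ Finset.range (N+1), (1+|(k:ℝ)-(kb:ℝ)|)⁻¹
          ≤ 2*K*Lb⁻¹ * (4*Lb) := mul_le_mul_of_nonneg_left hS4 (by positivity)
      _ = 8*K := by
            field_simp
            ring
    calc ∑' k, T k ≤ ∑' k, (3*V k + B k) := Summable.tsum_le_tsum key hTsum hRsum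
    _ = 3*tV + ∑' k, B k := by
        rw [Summable.tsum_add (hVsum.mul_left 3) hBsum, tsum_mul_left, htVdef]
    _ ≤ 3*tV + 8*K := by linarith
    _ ≤ 3*tV + 8*K + 1 := by linarith
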